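/- arXiv:math/9804004 — 2 statements merged into one kernel-verified Lean document; each statement's English description precedes it below -/
import Mathlib

section
/- Let ℐ be the family of independent sets of a symplectic matroid (E_{±n}, ℬ), and let I and J be members of ℐ such that |I| < |J| and such that for all y ∈ J∖I the set {y} ∪ I is not in ℐ. Then I ∪ J is inadmissible, i.e., there exists z ∈ I ∪ J with −z ∈ I ∪ J. -/
/-- The ground set `E_{±n} = {±1, ±2, …, ±n}` as a finite set of integers. -/
noncomputable def SympE (n : ℕ) : Finset ℤ := (Finset.Icc (-(n : ℤ)) (n : ℤ)).erase 0

/-- `negSet S = {-s : s ∈ S}`. -/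
def negSet (S : Finset ℤ) : Finset ℤ := S.image (fun x => -x)

/-- A set `S` is admissible if `S ∩ (-S) = ∅`. -/
def IsAdmissibleSet (S : Finset ℤ) : Prop := ∀ s ∈ S, -s ∉ S

/-- An admissible permutation of `E_{±n}`: a permutation of `ℤ` mapping `E_{±n}` to
itself and commuting with negation.  It induces the admissible total ordering
`x ≺ y ↔ w x < w y` on `E_{±n}`. -/
def IsAdmissiblePerm (n : ℕ) (w : Equiv.Perm ℤ) : Prop :=
  (∀ x ∈ SympE n, w x ∈ SympE n) ∧ ∀ x : ℤ, w (-x) = -(w x)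

/-- A weight function `ω` compatible with the admissible ordering induced by `w`:
`i ≺ j` implies `ω i ≤ ω j`. -/
def IsCompatibleWeight (n : ℕ) (w : Equiv.Perm ℤ) (ω : ℤ → ℝ) : Prop :=
  ∀ i ∈ SympE n, ∀ j ∈ SympE n, w i < w j → ω i ≤ ω j

/-- The elements of `E_{±n}` listed from largest to smallest with respect to the
admissible ordering induced by `w`. -/
noncomputable def orderList (n : ℕ) (w : Equiv.Perm ℤ) : List ℤ :=
  (((SympE n).sort (· ≤ ·)).reverse).map w.symm

/-- The greedy algorithm: processing the elements of the list in order, starting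
with the current set `B`, pick up an element iff adding it keeps the current set
a subset of some member of `ℬ`.  Returns the list of picked-up elements in order. -/
def greedyAux (ℬ : Finset (Finset ℤ)) : List ℤ → Finset ℤ → List ℤ
  | [], _ => []
  | a :: l, B =>
      if ∃ B' ∈ ℬ, insert a B ⊆ B' then a :: greedyAux ℬ l (insert a B)
      else greedyAux ℬ l B

/-- The list of elements picked up by the greedy algorithm on `ℬ`, in decreasing
order with respect to the admissible ordering induced by `w`. -/
noncomputable def greedyPicks (n : ℕ) (ℬ : Finset (Finset ℤ)) (w : Equiv.Perm ℤ) : List ℤ :=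
  greedyAux ℬ (orderList n w) ∅

/-- The greedy solution of `ℬ` with respect to the admissible ordering induced
by `w`. -/
noncomputable def greedySol (n : ℕ) (ℬ : Finset (Finset ℤ)) (w : Equiv.Perm ℤ) : Finset ℤ :=
  (greedyPicks n ℬ w).toFinset

/-- `(E_{±n}, ℬ)` is a symplectic matroid: `ℬ` is a nonempty family of
equinumerous admissible subsets of `E_{±n}` such that for every admissible
ordering and every compatible weight function the greedy solution is optimal. -/
def IsSymplecticMatroid (n : ℕ) (ℬ : Finset (Finset ℤ)) : Prop :=
  ℬ.Nonempty ∧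
  (∀ B ∈ ℬ, B ⊆ SympE n ∧ IsAdmissibleSet B) ∧
  (∀ B ∈ ℬ, ∀ B' ∈ ℬ, B.card = B'.card) ∧
  (∀ w : Equiv.Perm ℤ, IsAdmissiblePerm n w →
    ∀ ω : ℤ → ℝ, IsCompatibleWeight n w ω →
      ∀ B' ∈ ℬ, ∑ b ∈ B', ω b ≤ ∑ b ∈ greedySol n ℬ w, ω b)

/-- The family of independent sets of `(E_{±n}, ℬ)`:
all subsets of `E_{±n}` contained in some member of `ℬ`. -/
noncomputable def indepSets (n : ℕ) (ℬ : Finset (Finset ℤ)) : Finset (Finset ℤ) :=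
  (SympE n).powerset.filter (fun I => ∃ B ∈ ℬ, I ⊆ B)

/-- The collection of maximal (with respect to inclusion) members of `ℐ`. -/
def maximalMembers (ℐ : Finset (Finset ℤ)) : Finset (Finset ℤ) :=
  ℐ.filter (fun B => ∀ I ∈ ℐ, B ⊆ I → I = B)

/-- The independent-set exchange property for symplectic matroids. -/
def ExchangeProp (ℐ : Finset (Finset ℤ)) : Prop :=
  ∀ I ∈ ℐ, ∀ J ∈ ℐ, I.card < J.card →
    (∀ y ∈ J \ I, insert y I ∉ ℐ) →
      ¬ IsAdmissibleSet (I ∪ J) ∧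
        ∃ x, x ∉ I ∧ insert x I ∈ ℐ ∧ insert (-x) (I \ negSet J) ∈ ℐ

/-! ### Auxiliary machinery -/

section AuxMachinery

lemma mem_SympE {n : ℕ} {x : ℤ} : x ∈ SympE n ↔ x ≠ 0 ∧ -(n:ℤ) ≤ x ∧ x ≤ n := by
  simp only [SympE, Finset.mem_erase, Finset.mem_Icc, ne_eq, and_assoc]

/-- List of absolute values. -/
def absList (L : List ℤ) : List ℤ := L.map (fun x => |x|)

/-- Sorted list of the values in `[1,n]` not hit by `absList L`. -/
noncomputable def compDom (n : ℕ) (L : List ℤ) : List ℤ :=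
  ((Finset.Icc 1 (n:ℤ)) \ (absList L).toFinset).sort (· ≤ ·)

/-- Sorted list of the values in `[1, n - |L|]`. -/
noncomputable def compTar (n : ℕ) (L : List ℤ) : List ℤ :=
  (Finset.Icc 1 ((n:ℤ) - L.length)).sort (· ≤ ·)

/-- The absolute-value part of the signed permutation. -/
noncomputable def gFun (n : ℕ) (L : List ℤ) (v : ℤ) : ℤ :=
  if v ∈ absList L then
    (if 0 < L.getD ((absList L).idxOf v) 0 then 1 else -1) *
      ((n:ℤ) - (absList L).idxOf v)
  else (compTar n L).getD ((compDom n L).idxOf v) 0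

/-- The signed permutation sending `L` to the top values `n, n-1, …`. -/
noncomputable def fFun (n : ℕ) (L : List ℤ) (x : ℤ) : ℤ :=
  if 0 < x ∧ x ≤ (n:ℤ) then gFun n L x
  else if 0 < -x ∧ -x ≤ (n:ℤ) then -gFun n L (-x) else x

/-- Conditions on `L` making `fFun` a good admissible permutation. -/
structure GoodL (n : ℕ) (L : List ℤ) : Prop where
  nodupAbs : (absList L).Nodup
  memS : ∀ x ∈ L, x ∈ SympE n
  len_le : L.length ≤ n

namespace GoodL

variable {n : ℕ} {L : List ℤ} (hG : GoodL n L)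

lemma fFun_neg (x : ℤ) : fFun n L (-x) = - fFun n L x := by
  unfold fFun
  simp only [neg_neg]
  by_cases h1 : 0 < x ∧ x ≤ (n:ℤ)
  · rw [if_neg (by omega), if_pos h1, if_pos h1]
  · by_cases h2 : 0 < -x ∧ -x ≤ (n:ℤ)
    · rw [if_pos h2, if_neg h1, if_pos h2, neg_neg]
    · rw [if_neg h2, if_neg h1, if_neg h1, if_neg h2]

include hG

lemma gFun_abs_get (m : Fin L.length) :
    gFun n L (|L.get m|) = (if 0 < L.get m then 1 else -1) * ((n:ℤ) - (m:ℕ)) := by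
  have hv : |L.get m| = (absList L).get ⟨m, by simp [absList]⟩ := by
    simp [absList]
  have hmem : |L.get m| ∈ absList L := by
    rw [hv]; exact List.get_mem (absList L) _
  have hidx : (absList L).idxOf (|L.get m|) = m := by
    rw [hv]
    simpa using List.get_idxOf hG.nodupAbs ⟨m, by simp [absList]⟩
  have hgetD : L.getD (↑m) 0 = L.get m := by
    rw [List.getD_eq_getElem L 0 m.isLt]; simp [List.get_eq_getElem]
  unfold gFun
  rw [if_pos hmem, hidx, hgetD]

lemma fFun_get (m : Fin L.length) : fFun n L (L.get m) = (n:ℤ) - (m:ℕ) := by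
  have hS := hG.memS (L.get m) (List.get_mem L _)
  rw [mem_SympE] at hS
  obtain ⟨hne, hlb, hub⟩ := hS
  rcases lt_trichotomy (L.get m) 0 with h | h | h
  · have habs : |L.get m| = -(L.get m) := abs_of_neg h
    have hg := hG.gFun_abs_get m
    rw [if_neg (by omega)] at hg
    unfold fFun
    rw [if_neg (by omega), if_pos (by constructor <;> omega)]
    rw [show -L.get m = |L.get m| by omega, hg]
    ring
  · exact absurd h hne
  · have habs : |L.get m| = L.get m := abs_of_pos h
    have hg := hG.gFun_abs_get m
    rw [if_pos h, habs] at hg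
    unfold fFun
    rw [if_pos (by constructor <;> omega), hg]
    ring

lemma length_compDom : (compDom n L).length = n - L.length := by
  have hsub : (absList L).toFinset ⊆ Finset.Icc 1 (n:ℤ) := by
    intro v hv
    rw [List.mem_toFinset] at hv
    obtain ⟨x, hx, rfl⟩ := List.mem_map.1 hv
    have := hG.memS x hx
    rw [mem_SympE] at this
    rw [Finset.mem_Icc]
    rcases abs_cases x with ⟨h1, h2⟩ | ⟨h1, h2⟩ <;> omega
  have hcard : (absList L).toFinset.card = L.length := by
    rw [List.toFinset_card_of_nodup hG.nodupAbs]
    simp [absList]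
  rw [compDom, Finset.length_sort, Finset.card_sdiff_of_subset hsub, hcard, Int.card_Icc]
  omega

omit hG in
lemma length_compTar : (compTar n L).length = n - L.length := by
  unfold compTar
  rw [Finset.length_sort, Int.card_Icc]
  omega

lemma gFun_of_not_mem {v : ℤ} (hv : v ∈ Finset.Icc (1:ℤ) n) (hv' : v ∉ absList L) :
    gFun n L v ∈ Finset.Icc (1:ℤ) ((n:ℤ) - L.length) := by
  have hmemD : v ∈ compDom n L := by
    rw [compDom, Finset.mem_sort, Finset.mem_sdiff, List.mem_toFinset]
    exact ⟨hv, hv'⟩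
  have hidx : (compDom n L).idxOf v < (compTar n L).length := by
    rw [length_compTar, ← hG.length_compDom]
    exact List.idxOf_lt_length_iff.2 hmemD
  unfold gFun
  rw [if_neg hv', List.getD_eq_getElem _ 0 hidx]
  have : (compTar n L)[(compDom n L).idxOf v] ∈ compTar n L := List.getElem_mem _
  unfold compTar at this
  rwa [Finset.mem_sort] at this

lemma gFun_of_mem {v : ℤ} (hv : v ∈ absList L) :
    |gFun n L v| = (n:ℤ) - (absList L).idxOf v ∧
      (absList L).idxOf v < L.length := by
  have hidx : (absList L).idxOf v < (absList L).length := List.idxOf_lt_length_iff.2 hv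
  have hlen : (absList L).length = L.length := by simp [absList]
  constructor
  · unfold gFun
    rw [if_pos hv, abs_mul]
    have h1 : |(if 0 < L.getD ((absList L).idxOf v) 0 then (1:ℤ) else -1)| = 1 := by
      split_ifs <;> simp
    rw [h1, one_mul, abs_of_pos]
    have := hG.len_le
    omega
  · omega

lemma abs_gFun_mem {v : ℤ} (hv : v ∈ Finset.Icc (1:ℤ) n) :
    |gFun n L v| ∈ Finset.Icc (1:ℤ) (n:ℤ) := by
  by_cases h : v ∈ absList L
  · obtain ⟨h1, h2⟩ := hG.gFun_of_mem h
    rw [h1, Finset.mem_Icc]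
    have := hG.len_le
    omega
  · have hm := hG.gFun_of_not_mem hv h
    rw [Finset.mem_Icc] at hm
    rw [abs_of_pos (by omega : (0:ℤ) < gFun n L v), Finset.mem_Icc]
    have := hG.len_le
    omega

lemma abs_gFun_injOn {v₁ v₂ : ℤ} (h₁ : v₁ ∈ Finset.Icc (1:ℤ) n)
    (h₂ : v₂ ∈ Finset.Icc (1:ℤ) n) (he : |gFun n L v₁| = |gFun n L v₂|) :
    v₁ = v₂ := by
  by_cases hm₁ : v₁ ∈ absList L <;> by_cases hm₂ : v₂ ∈ absList L
  · obtain ⟨e₁, l₁⟩ := hG.gFun_of_mem hm₁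
    obtain ⟨e₂, l₂⟩ := hG.gFun_of_mem hm₂
    have hm : (absList L).idxOf v₁ = (absList L).idxOf v₂ := by omega
    exact (List.idxOf_inj hm₁).1 hm
  · exfalso
    obtain ⟨e₁, l₁⟩ := hG.gFun_of_mem hm₁
    have h2 := hG.gFun_of_not_mem h₂ hm₂
    rw [Finset.mem_Icc] at h2
    have : |gFun n L v₂| = gFun n L v₂ := abs_of_pos (by omega)
    omega
  · exfalso
    obtain ⟨e₂, l₂⟩ := hG.gFun_of_mem hm₂
    have h1 := hG.gFun_of_not_mem h₁ hm₁
    rw [Finset.mem_Icc] at h1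
    have : |gFun n L v₁| = gFun n L v₁ := abs_of_pos (by omega)
    omega
  · have h1 := hG.gFun_of_not_mem h₁ hm₁
    have h2 := hG.gFun_of_not_mem h₂ hm₂
    rw [Finset.mem_Icc] at h1 h2
    rw [abs_of_pos (by omega : (0:ℤ) < gFun n L v₁),
        abs_of_pos (by omega : (0:ℤ) < gFun n L v₂)] at he
    have hmemD₁ : v₁ ∈ compDom n L := by
      rw [compDom, Finset.mem_sort, Finset.mem_sdiff, List.mem_toFinset]; exact ⟨h₁, hm₁⟩
    have hmemD₂ : v₂ ∈ compDom n L := by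
      rw [compDom, Finset.mem_sort, Finset.mem_sdiff, List.mem_toFinset]; exact ⟨h₂, hm₂⟩
    have hidx₁ : (compDom n L).idxOf v₁ < (compTar n L).length := by
      rw [length_compTar, ← hG.length_compDom]
      exact List.idxOf_lt_length_iff.2 hmemD₁
    have hidx₂ : (compDom n L).idxOf v₂ < (compTar n L).length := by
      rw [length_compTar, ← hG.length_compDom]
      exact List.idxOf_lt_length_iff.2 hmemD₂
    have hg₁ : gFun n L v₁ = (compTar n L).get ⟨_, hidx₁⟩ := by
      unfold gFun; rw [if_neg hm₁, List.getD_eq_getElem _ 0 hidx₁]; rfl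
    have hg₂ : gFun n L v₂ = (compTar n L).get ⟨_, hidx₂⟩ := by
      unfold gFun; rw [if_neg hm₂, List.getD_eq_getElem _ 0 hidx₂]; rfl
    rw [hg₁, hg₂] at he
    have hnd : (compTar n L).Nodup := Finset.sort_nodup _ _
    have hij : (compDom n L).idxOf v₁ = (compDom n L).idxOf v₂ :=
      congrArg Fin.val ((List.Nodup.get_inj_iff hnd).1 he)
    exact (List.idxOf_inj hmemD₁).1 hij

lemma fFun_mem_SympE {x : ℤ} (hx : x ∈ SympE n) : fFun n L x ∈ SympE n := by
  rw [mem_SympE] at hx ⊢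
  obtain ⟨hne, hlb, hub⟩ := hx
  rcases lt_trichotomy x 0 with h | h | h
  · have hfx : fFun n L x = -gFun n L (-x) := by
      unfold fFun; rw [if_neg (by omega), if_pos (by constructor <;> omega)]
    rw [hfx]
    have hm := hG.abs_gFun_mem (v := -x) (by rw [Finset.mem_Icc]; omega)
    rw [Finset.mem_Icc] at hm
    rcases abs_cases (gFun n L (-x)) with ⟨h1, h2⟩ | ⟨h1, h2⟩ <;>
      exact ⟨by omega, by omega, by omega⟩
  · exact absurd h hne
  · have hfx : fFun n L x = gFun n L x := by
      unfold fFun; rw [if_pos (by constructor <;> omega)]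
    rw [hfx]
    have hm := hG.abs_gFun_mem (v := x) (by rw [Finset.mem_Icc]; omega)
    rw [Finset.mem_Icc] at hm
    rcases abs_cases (gFun n L x) with ⟨h1, h2⟩ | ⟨h1, h2⟩ <;>
      exact ⟨by omega, by omega, by omega⟩

omit hG in
lemma fFun_of_not_mem_SympE {x : ℤ} (hx : x ∉ SympE n) : fFun n L x = x := by
  rw [mem_SympE] at hx
  unfold fFun
  rw [if_neg (by omega), if_neg (by omega)]

lemma abs_fFun {x : ℤ} (hx : x ∈ SympE n) : |fFun n L x| = |gFun n L (|x|)| := by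
  rw [mem_SympE] at hx
  obtain ⟨hne, hlb, hub⟩ := hx
  rcases lt_trichotomy x 0 with h | h | h
  · have hfx : fFun n L x = -gFun n L (-x) := by
      unfold fFun; rw [if_neg (by omega), if_pos (by constructor <;> omega)]
    rw [hfx, abs_neg, abs_of_neg h]
  · exact absurd h hne
  · have hfx : fFun n L x = gFun n L x := by
      unfold fFun; rw [if_pos (by constructor <;> omega)]
    rw [hfx, abs_of_pos h]

lemma fFun_injective : Function.Injective (fFun n L) := by
  intro x y he
  by_cases hx : x ∈ SympE n <;> by_cases hy : y ∈ SympE n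
  · have hax : |x| ∈ Finset.Icc (1:ℤ) n := by
      rw [mem_SympE] at hx; rw [Finset.mem_Icc]
      rcases abs_cases x with ⟨h1, h2⟩ | ⟨h1, h2⟩ <;> omega
    have hay : |y| ∈ Finset.Icc (1:ℤ) n := by
      rw [mem_SympE] at hy; rw [Finset.mem_Icc]
      rcases abs_cases y with ⟨h1, h2⟩ | ⟨h1, h2⟩ <;> omega
    have habs : |x| = |y| := by
      apply hG.abs_gFun_injOn hax hay
      rw [← hG.abs_fFun hx, ← hG.abs_fFun hy, he]
    rcases abs_eq_abs.1 habs with rfl | rfl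
    · rfl
    · exfalso
      rw [fFun_neg] at he
      have h0 : fFun n L y = 0 := by omega
      have hS := hG.fFun_mem_SympE hy
      rw [mem_SympE] at hS
      exact hS.1 h0
  · exfalso
    rw [fFun_of_not_mem_SympE hy] at he
    exact hy (he ▸ hG.fFun_mem_SympE hx)
  · exfalso
    rw [fFun_of_not_mem_SympE hx] at he
    exact hx (he.symm ▸ hG.fFun_mem_SympE hy)
  · rw [fFun_of_not_mem_SympE hx, fFun_of_not_mem_SympE hy] at he
    exact he

lemma fFun_bijective : Function.Bijective (fFun n L) := by
  refine ⟨hG.fFun_injective, ?_⟩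
  intro y
  by_cases hy : y ∈ Finset.Icc (-(n:ℤ)) n
  · have hmaps : ∀ a ∈ Finset.Icc (-(n:ℤ)) n, fFun n L a ∈ Finset.Icc (-(n:ℤ)) n := by
      intro a ha
      by_cases haS : a ∈ SympE n
      · have := hG.fFun_mem_SympE haS
        rw [mem_SympE] at this
        rw [Finset.mem_Icc]
        omega
      · rw [fFun_of_not_mem_SympE haS]; exact ha
    obtain ⟨a, _, ha⟩ := Finset.surj_on_of_inj_on_of_card_le
      (s := Finset.Icc (-(n:ℤ)) n) (t := Finset.Icc (-(n:ℤ)) n)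
      (fun a _ => fFun n L a) (fun a ha => hmaps a ha)
      (fun a₁ a₂ _ _ h => hG.fFun_injective h) le_rfl y hy
    exact ⟨a, ha.symm⟩
  · refine ⟨y, ?_⟩
    apply fFun_of_not_mem_SympE
    rw [mem_SympE]
    rw [Finset.mem_Icc] at hy
    omega

/-- The admissible permutation induced by `L`. -/
noncomputable def toPerm : Equiv.Perm ℤ := Equiv.ofBijective _ hG.fFun_bijective

@[simp] lemma toPerm_apply (x : ℤ) : hG.toPerm x = fFun n L x := rfl

lemma toPerm_admissible : IsAdmissiblePerm n hG.toPerm :=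
  ⟨fun x hx => hG.fFun_mem_SympE hx, fun x => fFun_neg x⟩

lemma fFun_le_of_not_memL {x : ℤ} (hx : x ∈ SympE n) (hx' : x ∉ L) :
    fFun n L x ≤ (n:ℤ) - L.length := by
  have hxS := hx
  rw [mem_SympE] at hxS
  obtain ⟨hne, hlb, hub⟩ := hxS
  by_cases hv : |x| ∈ absList L
  · obtain ⟨z, hz, hza⟩ := List.mem_map.1 hv
    rcases abs_eq_abs.1 hza with rfl | hzx
    · exact absurd hz hx'
    · obtain ⟨m, hm⟩ := List.mem_iff_get.1 hz
      have hfz := hG.fFun_get m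
      rw [hm] at hfz
      have hx2 : x = -z := by omega
      rw [hx2, fFun_neg, hfz]
      have hmlt : (m : ℕ) < L.length := m.isLt
      have := hG.len_le
      omega
  · rcases lt_trichotomy x 0 with h | h | h
    · have hfx : fFun n L x = -gFun n L (-x) := by
        unfold fFun; rw [if_neg (by omega), if_pos (by constructor <;> omega)]
      rw [hfx]
      have hmem := hG.gFun_of_not_mem (v := -x) (by rw [Finset.mem_Icc]; omega)
        ((abs_of_neg h) ▸ hv)
      rw [Finset.mem_Icc] at hmem
      have := hG.len_le
      omega
    · exact absurd h hne
    · have hfx : fFun n L x = gFun n L x := by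
        unfold fFun; rw [if_pos (by constructor <;> omega)]
      rw [hfx]
      have hmem := hG.gFun_of_not_mem (v := x) (by rw [Finset.mem_Icc]; omega)
        ((abs_of_pos h) ▸ hv)
      rw [Finset.mem_Icc] at hmem
      omega

end GoodL

/-! ### Greedy algorithm lemmas -/

lemma greedyAux_append_accept (ℬ : Finset (Finset ℤ)) (l₁ l₂ : List ℤ) (B : Finset ℤ)
    (h : ∃ B' ∈ ℬ, B ∪ l₁.toFinset ⊆ B') :
    greedyAux ℬ (l₁ ++ l₂) B = l₁ ++ greedyAux ℬ l₂ (B ∪ l₁.toFinset) := by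
  induction l₁ generalizing B with
  | nil => simp [greedyAux]
  | cons a l₁ ih =>
    obtain ⟨B', hB', hsub⟩ := h
    have hcond : ∃ B'' ∈ ℬ, insert a B ⊆ B'' := by
      refine ⟨B', hB', fun x hx => hsub ?_⟩
      rw [Finset.mem_insert] at hx
      rcases hx with rfl | hx
      · simp
      · simp [hx]
    have hBeq : insert a B ∪ l₁.toFinset = B ∪ (a :: l₁).toFinset := by
      ext x
      simp only [Finset.mem_union, Finset.mem_insert, List.toFinset_cons,
        List.mem_toFinset]
      tauto
    rw [List.cons_append, greedyAux, if_pos hcond, ih (insert a B) (by rw [hBeq]; exact ⟨B', hB', hsub⟩), hBeq]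
    rfl

lemma greedyAux_append_reject (ℬ : Finset (Finset ℤ)) (l₁ l₂ : List ℤ) (B : Finset ℤ)
    (h : ∀ a ∈ l₁, ¬ ∃ B' ∈ ℬ, insert a B ⊆ B') :
    greedyAux ℬ (l₁ ++ l₂) B = greedyAux ℬ l₂ B := by
  induction l₁ with
  | nil => simp
  | cons a l₁ ih =>
    rw [List.cons_append, greedyAux, if_neg (h a (by simp))]
    exact ih fun a ha => h a (by simp [ha])

lemma greedyAux_subset (ℬ : Finset (Finset ℤ)) :
    ∀ (l : List ℤ) (B : Finset ℤ), ∀ x ∈ greedyAux ℬ l B, x ∈ l := by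
  intro l
  induction l with
  | nil => intro B x hx; simp [greedyAux] at hx
  | cons a l ih =>
    intro B x hx
    rw [greedyAux] at hx
    split_ifs at hx with hc
    · rcases List.mem_cons.1 hx with rfl | hx
      · simp
      · exact List.mem_cons_of_mem _ (ih _ x hx)
    · exact List.mem_cons_of_mem _ (ih _ x hx)

end AuxMachinery

/-- If `ℐ` is the family of independent sets of a symplectic matroid
`(E_{±n}, ℬ)`, and `I, J ∈ ℐ` with `|I| < |J|` and `{y} ∪ I ∉ ℐ` for all
`y ∈ J \ I`, then `I ∪ J` is inadmissible, i.e., there exists `z ∈ I ∪ J` with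
`-z ∈ I ∪ J`. -/
theorem symplectic_matroid_union_inadmissible (n : ℕ) (hn : 0 < n)
    (ℬ : Finset (Finset ℤ)) (hB : IsSymplecticMatroid n ℬ)
    (I J : Finset ℤ)
    (hI : I ∈ indepSets n ℬ) (hJ : J ∈ indepSets n ℬ)
    (hcard : I.card < J.card)
    (hy : ∀ y ∈ J \ I, insert y I ∉ indepSets n ℬ) :
    ∃ z ∈ I ∪ J, -z ∈ I ∪ J := by
  by_contra hcon
  push_neg at hcon
  obtain ⟨hBne, hBprops, hBcardeq, hgreedy⟩ := hB
  rw [indepSets, Finset.mem_filter, Finset.mem_powerset] at hI hJ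
  obtain ⟨hIsub, BI, hBImem, hIBI⟩ := hI
  obtain ⟨hJsub, BJ, hBJmem, hJBJ⟩ := hJ
  set LI : List ℤ := I.sort (· ≤ ·) with hLI
  set LJ : List ℤ := (J \ I).sort (· ≤ ·) with hLJ
  set L : List ℤ := LI ++ LJ with hLdef
  have hLto : L.toFinset = I ∪ J := by
    rw [hLdef, List.toFinset_append, hLI, hLJ, Finset.sort_toFinset, Finset.sort_toFinset]
    ext x
    simp only [Finset.mem_union, Finset.mem_sdiff]
    tauto
  have hLmem : ∀ x ∈ L, x ∈ SympE n := by
    intro x hx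
    have hxU : x ∈ I ∪ J := by rw [← hLto]; exact List.mem_toFinset.2 hx
    rcases Finset.mem_union.1 hxU with h | h
    exacts [hIsub h, hJsub h]
  have hLnodup : L.Nodup := by
    refine (Finset.sort_nodup _ _).append (Finset.sort_nodup _ _) ?_
    intro a haI haJ
    have h1 : a ∈ I := (Finset.mem_sort _).1 haI
    rw [hLJ] at haJ
    exact (Finset.mem_sdiff.1 ((Finset.mem_sort _).1 haJ)).2 h1
  have hAbsNodup : (absList L).Nodup := by
    refine List.Nodup.map_on ?_ hLnodup
    intro x hx y hy hxy
    rcases abs_eq_abs.1 hxy with h | h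
    · exact h
    · exfalso
      have hxU : x ∈ I ∪ J := by rw [← hLto]; exact List.mem_toFinset.2 hx
      have hyU : y ∈ I ∪ J := by rw [← hLto]; exact List.mem_toFinset.2 hy
      exact hcon y hyU (h ▸ hxU)
  have hlen_le : L.length ≤ n := by
    have h1 : (absList L).toFinset ⊆ Finset.Icc 1 (n:ℤ) := by
      intro v hv
      rw [List.mem_toFinset] at hv
      obtain ⟨x, hx, rfl⟩ := List.mem_map.1 hv
      have := hLmem x hx
      rw [mem_SympE] at this
      rw [Finset.mem_Icc]
      rcases abs_cases x with ⟨h1, h2⟩ | ⟨h1, h2⟩ <;> omega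
    have h2 := Finset.card_le_card h1
    rw [List.toFinset_card_of_nodup hAbsNodup] at h2
    rw [Int.card_Icc] at h2
    simp only [absList, List.length_map] at h2
    omega
  have hG : GoodL n L := ⟨hAbsNodup, hLmem, hlen_le⟩
  set w := hG.toPerm with hwdef
  set k := L.length with hk
  set ω : ℤ → ℝ := fun x => if (n:ℤ) - k < fFun n L x then 1 else 0 with hω
  have hωcomp : IsCompatibleWeight n w ω := by
    intro i _ j _ hij
    have hij' : fFun n L i < fFun n L j := hij
    by_cases h2 : (n:ℤ) - k < fFun n L j
    · by_cases h1 : (n:ℤ) - k < fFun n L i <;> simp [hω, h1, h2]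
    · have h1 : ¬((n:ℤ) - k < fFun n L i) := by omega
      simp [hω, h1, h2]
  have hω1 : ∀ x ∈ I ∪ J, ω x = 1 := by
    intro x hx
    rw [← hLto, List.mem_toFinset] at hx
    obtain ⟨m, rfl⟩ := List.mem_iff_get.1 hx
    have hfm := hG.fFun_get m
    have hm : (m : ℕ) < k := m.isLt
    simp only [hω]
    rw [if_pos (by omega)]
  have hω0 : ∀ x ∈ SympE n, x ∉ I ∪ J → ω x = 0 := by
    intro x hxS hxU
    have hxL : x ∉ L := fun hc => hxU (hLto ▸ List.mem_toFinset.2 hc)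
    have := hG.fFun_le_of_not_memL hxS hxL
    simp only [hω]
    rw [if_neg (by omega)]
  have hωnn : ∀ x, (0:ℝ) ≤ ω x := by
    intro x
    simp only [hω]
    split_ifs <;> norm_num
  have hwS : ∀ x ∈ SympE n, w x ∈ SympE n := hG.toPerm_admissible.1
  have hwsymmS : ∀ y ∈ SympE n, w.symm y ∈ SympE n := by
    intro y hy
    by_contra hc
    have h1 : fFun n L (w.symm y) = w.symm y := GoodL.fFun_of_not_mem_SympE hc
    have h3 : fFun n L (w.symm y) = y := w.apply_symm_apply y
    rw [h1] at h3
    rw [h3] at hc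
    exact hc hy
  have himg : (SympE n).image (⇑w.symm) = SympE n := by
    apply Finset.Subset.antisymm
    · intro y hy
      obtain ⟨x, hx, rfl⟩ := Finset.mem_image.1 hy
      exact hwsymmS x hx
    · intro y hy
      exact Finset.mem_image.2 ⟨w y, hwS y hy, w.symm_apply_apply y⟩
  set rest : List ℤ :=
    ((((SympE n \ L.toFinset).image ⇑w).sort (· ≤ ·)).reverse).map ⇑w.symm with hrest
  have hrestmem : ∀ x ∈ rest, x ∈ SympE n ∧ x ∉ L := by
    intro x hx
    rw [hrest] at hx
    obtain ⟨y, hy, rfl⟩ := List.mem_map.1 hx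
    rw [List.mem_reverse, Finset.mem_sort] at hy
    obtain ⟨z, hz, rfl⟩ := Finset.mem_image.1 hy
    rw [Finset.mem_sdiff] at hz
    rw [Equiv.symm_apply_apply]
    exact ⟨hz.1, fun hc => hz.2 (List.mem_toFinset.2 hc)⟩
  have hrestval : ∀ x ∈ rest, fFun n L x ≤ (n:ℤ) - k := by
    intro x hx
    obtain ⟨h1, h2⟩ := hrestmem x hx
    exact hG.fFun_le_of_not_memL h1 h2
  have hLval : ∀ x ∈ L, (n:ℤ) - k < fFun n L x := by
    intro x hx
    obtain ⟨m, rfl⟩ := List.mem_iff_get.1 hx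
    have hfm := hG.fFun_get m
    have hm : (m : ℕ) < k := m.isLt
    omega
  letI : Std.Antisymm (fun a b => fFun n L b ≤ fFun n L a) :=
    ⟨fun a b h1 h2 => hG.fFun_injective (le_antisymm h2 h1)⟩
  have hOsorted : (orderList n w).Pairwise (fun a b => fFun n L b ≤ fFun n L a) := by
    rw [orderList, List.pairwise_map]
    have hp : ((SympE n).sort (· ≤ ·)).reverse.Pairwise (fun a b => b < a) := by
      rw [List.pairwise_reverse]
      exact (Finset.sortedLT_sort _).pairwise
    refine hp.imp ?_
    intro a b hab
    show fFun n L (w.symm b) ≤ fFun n L (w.symm a)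
    rw [show fFun n L (w.symm a) = a from w.apply_symm_apply a,
        show fFun n L (w.symm b) = b from w.apply_symm_apply b]
    omega
  have hLRsorted : (L ++ rest).Pairwise (fun a b => fFun n L b ≤ fFun n L a) := by
    rw [List.pairwise_append]
    refine ⟨?_, ?_, ?_⟩
    · rw [List.pairwise_iff_get]
      intro i j hij
      have hi := hG.fFun_get i
      have hj := hG.fFun_get j
      have hij' : (i : ℕ) < (j : ℕ) := hij
      show fFun n L (L.get j) ≤ fFun n L (L.get i)
      omega
    · rw [hrest, List.pairwise_map]
      have hp : (((SympE n \ L.toFinset).image ⇑w).sort (· ≤ ·)).reverse.Pairwise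
          (fun a b => b < a) := by
        rw [List.pairwise_reverse]
        exact (Finset.sortedLT_sort _).pairwise
      refine hp.imp ?_
      intro a b hab
      show fFun n L (w.symm b) ≤ fFun n L (w.symm a)
      rw [show fFun n L (w.symm a) = a from w.apply_symm_apply a,
          show fFun n L (w.symm b) = b from w.apply_symm_apply b]
      omega
    · intro a ha b hb
      show fFun n L b ≤ fFun n L a
      have h1 := hLval a ha
      have h2 := hrestval b hb
      omega
  have hOnodup : (orderList n w).Nodup := by
    rw [orderList]
    exact (List.nodup_reverse.2 (Finset.sort_nodup _ _)).map w.symm.injective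
  have hOto : (orderList n w).toFinset = SympE n := by
    rw [orderList]
    have : ((((SympE n).sort (· ≤ ·)).reverse).map ⇑w.symm).toFinset
        = (SympE n).image ⇑w.symm := by
      ext y
      simp only [List.mem_toFinset, List.mem_map, List.mem_reverse, Finset.mem_sort,
        Finset.mem_image]
    rw [this, himg]
  have hrestnodup : rest.Nodup := by
    rw [hrest]
    exact (List.nodup_reverse.2 (Finset.sort_nodup _ _)).map w.symm.injective
  have hLRnodup : (L ++ rest).Nodup := by
    refine hLnodup.append hrestnodup ?_
    intro a haL haR
    exact (hrestmem a haR).2 haL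
  have hrto : rest.toFinset = SympE n \ L.toFinset := by
    rw [hrest]
    have : ((((SympE n \ L.toFinset).image ⇑w).sort (· ≤ ·)).reverse.map ⇑w.symm).toFinset
        = ((SympE n \ L.toFinset).image ⇑w).image ⇑w.symm := by
      ext y
      simp only [List.mem_toFinset, List.mem_map, List.mem_reverse, Finset.mem_sort,
        Finset.mem_image]
    rw [this, Finset.image_image, Equiv.symm_comp_self, Finset.image_id]
  have hLRto : (L ++ rest).toFinset = SympE n := by
    rw [List.toFinset_append, hrto, hLto]
    have hsubU : I ∪ J ⊆ SympE n := Finset.union_subset hIsub hJsub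
    rw [← hLto]
    rw [hLto]
    exact Finset.union_sdiff_of_subset (hLto ▸ hsubU)
  have hperm : (orderList n w).Perm (L ++ rest) := by
    have h0 := List.toFinset_eq_iff_perm_dedup.1 (hOto.trans hLRto.symm)
    rwa [hOnodup.dedup, hLRnodup.dedup] at h0
  have horder : orderList n w = L ++ rest :=
    hperm.eq_of_pairwise' hOsorted hLRsorted
  have hIfin : LI.toFinset = I := by rw [hLI]; exact Finset.sort_toFinset _ _
  have hstep1 : greedyPicks n ℬ w = LI ++ greedyAux ℬ (LJ ++ rest) I := by
    rw [greedyPicks, horder, hLdef, List.append_assoc,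
      greedyAux_append_accept ℬ LI (LJ ++ rest) ∅
        ⟨BI, hBImem, by rw [Finset.empty_union, hIfin]; exact hIBI⟩,
      Finset.empty_union, hIfin]
  have hstep2 : greedyAux ℬ (LJ ++ rest) I = greedyAux ℬ rest I := by
    apply greedyAux_append_reject
    intro a ha hc
    obtain ⟨B', hB', hsub⟩ := hc
    rw [hLJ, Finset.mem_sort] at ha
    apply hy a ha
    rw [indepSets, Finset.mem_filter, Finset.mem_powerset]
    refine ⟨?_, B', hB', hsub⟩
    intro x hx
    rcases Finset.mem_insert.1 hx with rfl | hx
    · exact hJsub (Finset.mem_sdiff.1 ha).1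
    · exact hIsub hx
  set picks := greedyAux ℬ rest I with hpicksdef
  have hsol : greedySol n ℬ w = I ∪ picks.toFinset := by
    rw [greedySol, hstep1, hstep2, List.toFinset_append, hIfin]
  have hdisj : Disjoint I picks.toFinset := by
    rw [Finset.disjoint_left]
    intro a haI haP
    rw [List.mem_toFinset] at haP
    have haR := greedyAux_subset ℬ rest I a haP
    refine (hrestmem a haR).2 ?_
    rw [hLdef]
    exact List.mem_append.2 (Or.inl (by rw [hLI, Finset.mem_sort]; exact haI))
  have hsum : ∑ b ∈ greedySol n ℬ w, ω b = (I.card : ℝ) := by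
    rw [hsol, Finset.sum_union hdisj]
    have h1 : ∑ b ∈ I, ω b = (I.card : ℝ) := by
      rw [Finset.sum_congr rfl (fun x hx => hω1 x (Finset.mem_union_left _ hx))]
      simp
    have h2 : ∑ b ∈ picks.toFinset, ω b = 0 := by
      apply Finset.sum_eq_zero
      intro x hx
      rw [List.mem_toFinset] at hx
      have hxr := greedyAux_subset ℬ rest I x hx
      obtain ⟨hxS, hxL⟩ := hrestmem x hxr
      exact hω0 x hxS (fun hc => hxL (by rw [← List.mem_toFinset, hLto]; exact hc))
    rw [h1, h2, add_zero]
  have hkey := hgreedy w hG.toPerm_admissible ω hωcomp BJ hBJmem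
  have hJsum : (J.card : ℝ) ≤ ∑ b ∈ BJ, ω b := by
    have h1 : ∑ b ∈ J, ω b = (J.card : ℝ) := by
      rw [Finset.sum_congr rfl (fun x hx => hω1 x (Finset.mem_union_right _ hx))]
      simp
    rw [← h1]
    exact Finset.sum_le_sum_of_subset_of_nonneg hJBJ (fun x _ _ => hωnn x)
  rw [hsum] at hkey
  have hfinal : (J.card : ℝ) ≤ (I.card : ℝ) := le_trans hJsum hkey
  have := Nat.cast_le (α := ℝ) |>.1 hfinal
  omega
end

section
/- Let ℐ be a nonempty subset-closed family of admissible subsets of E_{±n} with the property that whenever I, J ∈ ℐ satisfy |I| < |J| and for all y ∈ J∖I the set {y} ∪ I is not in ℐ, then I ∪ J is inadmissible and there exists x ∉ I such that both {x} ∪ I and {−x} ∪ (I ∖ (−J)) are in ℐ. Let ℬ be the collection of maximal members of ℐ, let ≺ be an admissible total ordering of E_{±n}, and run the greedy algorithm on ℬ with respect to ≺. Let I be the set consisting of the first i elements picked up by the greedy algorithm (for some i ≥ 0), and let J be a member of ℐ with i < |J|. Then the (i+1)st element picked up by the greedy algorithm is no smaller with respect to ≺ than the smallest element of J. -/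
lemma greedyAux_sublist (ℬ : Finset (Finset ℤ)) (l : List ℤ) (B : Finset ℤ) :
    (greedyAux ℬ l B).Sublist l := by
  induction l generalizing B with
  | nil => simp [greedyAux]
  | cons a l ih =>
    simp only [greedyAux]
    split_ifs with h
    · exact (ih (insert a B)).cons₂ a
    · exact (ih B).cons a

lemma greedyAux_append (ℬ : Finset (Finset ℤ)) (l₁ l₂ : List ℤ) (B : Finset ℤ) :
    greedyAux ℬ (l₁ ++ l₂) B =
      greedyAux ℬ l₁ B ++ greedyAux ℬ l₂ (B ∪ (greedyAux ℬ l₁ B).toFinset) := by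
  induction l₁ generalizing B with
  | nil => simp [greedyAux]
  | cons a l₁ ih =>
    simp only [List.cons_append, greedyAux]
    split_ifs with h
    · rw [ih]
      simp only [List.cons_append, List.toFinset_cons]
      congr 2
      ext z; simp [Finset.mem_union, Finset.mem_insert, or_assoc]
    · rw [ih]

lemma greedyAux_subset_basis (ℬ : Finset (Finset ℤ)) (l : List ℤ) (B : Finset ℤ)
    (h : ∃ B' ∈ ℬ, B ⊆ B') :
    ∃ B' ∈ ℬ, B ∪ (greedyAux ℬ l B).toFinset ⊆ B' := by
  induction l generalizing B with
  | nil => simpa [greedyAux] using h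
  | cons a l ih =>
    simp only [greedyAux]
    split_ifs with hc
    · obtain ⟨B', hB', hsub⟩ := ih (insert a B) hc
      refine ⟨B', hB', ?_⟩
      intro z hz
      apply hsub
      simp only [Finset.mem_union, List.toFinset_cons, Finset.mem_insert] at hz ⊢
      tauto
    · exact ih B h

lemma greedyAux_accept_mem (ℬ : Finset (Finset ℤ)) (l : List ℤ) (B : Finset ℤ) (z : ℤ)
    (hz : z ∈ l)
    (h : ∃ B' ∈ ℬ, insert z (B ∪ (greedyAux ℬ l B).toFinset) ⊆ B') :
    z ∈ greedyAux ℬ l B ∨ z ∈ B := by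
  induction l generalizing B with
  | nil => simp at hz
  | cons a l ih =>
    simp only [greedyAux] at h ⊢
    rcases List.mem_cons.1 hz with rfl | hzl
    · split_ifs with hc
      · simp
      · exfalso
        obtain ⟨B', hB', hsub⟩ := h
        rw [if_neg hc] at hsub
        exact hc ⟨B', hB', fun u hu => hsub (by
          simp only [Finset.mem_insert, Finset.mem_union] at hu ⊢; tauto)⟩
    · split_ifs with hc
      · rw [if_pos hc] at h
        have := ih (insert a B) hzl (by
          obtain ⟨B', hB', hsub⟩ := h
          refine ⟨B', hB', fun u hu => hsub ?_⟩
          simp only [Finset.mem_insert, Finset.mem_union, List.toFinset_cons] at hu ⊢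
          tauto)
        rcases this with h1 | h1
        · exact Or.inl (List.mem_cons_of_mem _ h1)
        · rcases Finset.mem_insert.1 h1 with rfl | h1
          · exact Or.inl (List.mem_cons_self)
          · exact Or.inr h1
      · rw [if_neg hc] at h
        exact ih B hzl h

lemma exists_maximal_superset (ℐ : Finset (Finset ℤ)) (K : Finset ℤ) (hK : K ∈ ℐ) :
    ∃ B ∈ maximalMembers ℐ, K ⊆ B := by
  obtain ⟨M, hM, hMmax⟩ := (ℐ.filter (fun X => K ⊆ X)).exists_max_image Finset.card
    ⟨K, Finset.mem_filter.2 ⟨hK, le_refl K⟩⟩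
  rw [Finset.mem_filter] at hM
  refine ⟨M, Finset.mem_filter.2 ⟨hM.1, fun X hX hMX => ?_⟩, hM.2⟩
  exact (Finset.eq_of_subset_of_card_le hMX
    (hMmax X (Finset.mem_filter.2 ⟨hX, hM.2.trans hMX⟩))).symm

section OrderList
variable {n : ℕ} {w : Equiv.Perm ℤ} (hw : IsAdmissiblePerm n w)

lemma symm_mem_sympE (hw : IsAdmissiblePerm n w) {u : ℤ} (hu : u ∈ SympE n) :
    w.symm u ∈ SympE n := by
  have himg : (SympE n).image w = SympE n := by
    apply Finset.eq_of_subset_of_card_le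
    · intro u hu
      obtain ⟨z, hz, rfl⟩ := Finset.mem_image.1 hu
      exact hw.1 z hz
    · rw [Finset.card_image_of_injective _ w.injective]
  rw [← himg] at hu
  obtain ⟨z, hz, rfl⟩ := Finset.mem_image.1 hu
  simpa using hz

lemma mem_orderList (hw : IsAdmissiblePerm n w) {z : ℤ} :
    z ∈ orderList n w ↔ z ∈ SympE n := by
  simp only [orderList, List.mem_map, List.mem_reverse, Finset.mem_sort]
  constructor
  · rintro ⟨u, hu, rfl⟩; exact symm_mem_sympE hw hu
  · intro hz; exact ⟨w z, hw.1 z hz, w.symm_apply_apply z⟩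

lemma nodup_orderList : (orderList n w).Nodup :=
  (List.nodup_reverse.2 ((SympE n).sort_nodup (· ≤ ·))).map w.symm.injective

lemma pairwise_orderList : (orderList n w).Pairwise (fun a b => w b < w a) := by
  rw [orderList, List.pairwise_map]
  simp only [Equiv.apply_symm_apply]
  rw [List.pairwise_reverse]
  exact (Finset.sortedLT_sort (SympE n)).pairwise

lemma neg_mem_sympE {z : ℤ} (hz : z ∈ SympE n) : -z ∈ SympE n := by
  simp only [SympE, Finset.mem_erase, Finset.mem_Icc] at hz ⊢
  omega

end OrderList

/-- **Claim `(*)`.** Let `ℐ` be a nonempty subset-closed family of admissible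
subsets of `E_{±n}` with the exchange property, and run the greedy algorithm on
the collection of maximal members of `ℐ` with respect to an admissible ordering.
If `I` is the set of the first `i` elements picked up and `J ∈ ℐ` has `i < |J|`,
then the `(i+1)`-st element picked up exists and is no smaller (with respect to
the ordering) than the smallest element of `J`. -/
theorem greedy_star_claim (n : ℕ) (hn : 0 < n) (ℐ : Finset (Finset ℤ))
    (hne : ℐ.Nonempty)
    (hclosed : ∀ I ∈ ℐ, ∀ I' ⊆ I, I' ∈ ℐ)
    (hadm : ∀ I ∈ ℐ, I ⊆ SympE n ∧ IsAdmissibleSet I)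
    (hex : ExchangeProp ℐ)
    (w : Equiv.Perm ℤ) (hw : IsAdmissiblePerm n w)
    (i : ℕ) (I : Finset ℤ)
    (hI : I = ((greedyPicks n (maximalMembers ℐ) w).take i).toFinset)
    (J : Finset ℤ) (hJ : J ∈ ℐ) (hiJ : i < J.card) :
    ∃ x, (greedyPicks n (maximalMembers ℐ) w)[i]? = some x ∧
      ∃ y ∈ J, (∀ y' ∈ J, w y ≤ w y') ∧ w y ≤ w x := by
  classical
  have hgp : greedyPicks n (maximalMembers ℐ) w
      = greedyAux (maximalMembers ℐ) (orderList n w) ∅ := rfl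
  rw [hgp] at hI ⊢
  set ℬ := maximalMembers ℐ with hBdef
  set l := orderList n w with hldef
  set P := greedyAux ℬ l ∅ with hPdef
  have hBmem : ∀ B ∈ ℬ, B ∈ ℐ := fun B hB => (Finset.mem_filter.1 hB).1
  have hlnd : l.Nodup := nodup_orderList
  have hpw : l.Pairwise (fun a b => w b < w a) := pairwise_orderList
  have hpsub : P.Sublist l := greedyAux_sublist ℬ l ∅
  -- I is independent
  have hBne : ∃ B' ∈ ℬ, (∅ : Finset ℤ) ⊆ B' := by
    obtain ⟨K, hK⟩ := hne
    obtain ⟨B₀, hB₀, -⟩ := exists_maximal_superset ℐ K hK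
    exact ⟨B₀, hB₀, Finset.empty_subset _⟩
  obtain ⟨Bb, hBb, hPBb⟩ := greedyAux_subset_basis ℬ l ∅ hBne
  rw [Finset.empty_union] at hPBb
  have hIsubP : I ⊆ P.toFinset := by
    rw [hI]
    intro z hz
    rw [List.mem_toFinset] at hz ⊢
    exact (List.take_sublist i P).subset hz
  have hIc : I ∈ ℐ := hclosed Bb (hBmem Bb hBb) I (hIsubP.trans hPBb)
  have hIcard : I.card ≤ i := by
    rw [hI]
    exact le_trans (List.toFinset_card_le _)
      (by rw [List.length_take]; exact min_le_left _ _)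
  -- Step A : the (i+1)-st pick exists
  have hilen : i < P.length := by
    by_contra hlen
    push_neg at hlen
    have hIeq : I = P.toFinset := by rw [hI, List.take_of_length_le hlen]
    have hrej : ∀ y ∈ J \ I, insert y I ∉ ℐ := by
      intro y hy hins
      obtain ⟨B', hB', hsub⟩ := exists_maximal_superset ℐ _ hins
      have hyS : y ∈ SympE n := (hadm J hJ).1 (Finset.mem_sdiff.1 hy).1
      have := greedyAux_accept_mem ℬ l ∅ y ((mem_orderList hw).2 hyS)
        ⟨B', hB', by rw [Finset.empty_union, ← hIeq]; exact hsub⟩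
      rcases this with h1 | h1
      · exact (Finset.mem_sdiff.1 hy).2 (by rw [hIeq, List.mem_toFinset]; exact h1)
      · simp at h1
    obtain ⟨-, x, hxI, hxins, -⟩ := hex I hIc J hJ (lt_of_le_of_lt hIcard hiJ) hrej
    obtain ⟨B', hB', hsub⟩ := exists_maximal_superset ℐ _ hxins
    have hxS : x ∈ SympE n := (hadm _ hxins).1 (Finset.mem_insert_self _ _)
    have := greedyAux_accept_mem ℬ l ∅ x ((mem_orderList hw).2 hxS)
      ⟨B', hB', by rw [Finset.empty_union, ← hIeq]; exact hsub⟩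
    rcases this with h1 | h1
    · exact hxI (by rw [hIeq, List.mem_toFinset]; exact h1)
    · simp at h1
  -- the (i+1)-st pick
  set x₀ := P[i]'hilen with hx₀def
  refine ⟨x₀, by rw [List.getElem?_eq_getElem hilen], ?_⟩
  have hJne : J.Nonempty := Finset.card_pos.1 (lt_of_le_of_lt (Nat.zero_le i) hiJ)
  obtain ⟨y, hyJ, hymin⟩ := J.exists_min_image (fun z => w z) hJne
  refine ⟨y, hyJ, hymin, ?_⟩
  -- Step B : suppose the minimum of J is above x₀
  by_contra hcon
  push_neg at hcon
  -- decompose the order list at x₀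
  have hx₀P : x₀ ∈ P := List.getElem_mem _
  have hx₀l : x₀ ∈ l := hpsub.subset hx₀P
  obtain ⟨l₁, l₂, hl⟩ := List.append_of_mem hx₀l
  have hndl : (l₁ ++ x₀ :: l₂).Nodup := by rw [← hl]; exact hlnd
  have hx₀l₁ : x₀ ∉ l₁ := by
    intro h
    exact (List.disjoint_of_nodup_append hndl) h (List.mem_cons_self)
  have hx₀l₂ : x₀ ∉ l₂ := by
    have := (List.nodup_append.1 hndl).2.1
    exact (List.nodup_cons.1 this).1
  set P₁ := greedyAux ℬ l₁ ∅ with hP₁def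
  have happ : P = P₁ ++ greedyAux ℬ (x₀ :: l₂) P₁.toFinset := by
    rw [hPdef, hl, greedyAux_append, Finset.empty_union]
  have hcond : ∃ B' ∈ ℬ, insert x₀ P₁.toFinset ⊆ B' := by
    by_contra hc
    have hpe : greedyAux ℬ (x₀ :: l₂) P₁.toFinset = greedyAux ℬ l₂ P₁.toFinset := by
      simp only [greedyAux]; rw [if_neg hc]
    have hx := hx₀P
    rw [happ, hpe] at hx
    rcases List.mem_append.1 hx with h | h
    · exact hx₀l₁ ((greedyAux_sublist _ _ _).subset h)
    · exact hx₀l₂ ((greedyAux_sublist _ _ _).subset h)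
  have happ2 : P = P₁ ++ x₀ :: greedyAux ℬ l₂ (insert x₀ P₁.toFinset) := by
    rw [happ]; congr 1; simp only [greedyAux]; rw [if_pos hcond]
  -- P₁ has length i
  have hlenP : P₁.length < P.length := by
    rw [happ2]; simp
  have hgP1 : P[P₁.length]? = some x₀ := by
    conv_lhs => rw [happ2]
    rw [List.getElem?_append_right (le_refl _)]
    simp
  have hlen1 : P₁.length = i := by
    have h2 : P[i]? = some x₀ := by rw [List.getElem?_eq_getElem hilen]
    exact (List.getElem?_inj hlenP (hpsub.nodup hlnd)).1 (hgP1.trans h2.symm)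
  have hIeqB : I = P₁.toFinset := by
    rw [hI, happ2, ← hlen1, List.take_left]
  -- elements strictly above x₀ lie in l₁
  have hmeml₁ : ∀ z ∈ SympE n, w x₀ < w z → z ∈ l₁ := by
    intro z hz hlt
    have hzl : z ∈ l := (mem_orderList hw).2 hz
    rw [hl] at hzl
    rcases List.mem_append.1 hzl with h | h
    · exact h
    rcases List.mem_cons.1 h with rfl | h
    · exact absurd hlt (lt_irrefl _)
    · have hpw' := hpw
      rw [hl, List.pairwise_append] at hpw'
      have := (List.pairwise_cons.1 hpw'.2.1).1 z h
      exact absurd hlt (not_lt.2 this.le)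
  -- key rejection fact
  have hkey : ∀ z, z ∈ SympE n → z ∉ I → w x₀ < w z → insert z I ∉ ℐ := by
    intro z hzS hzI hlt hins
    obtain ⟨B', hB', hsub⟩ := exists_maximal_superset ℐ _ hins
    have := greedyAux_accept_mem ℬ l₁ ∅ z (hmeml₁ z hzS hlt)
      ⟨B', hB', by rw [Finset.empty_union, ← hP₁def, ← hIeqB]; exact hsub⟩
    rcases this with h1 | h1
    · exact hzI (by rw [hIeqB, List.mem_toFinset]; exact h1)
    · simp at h1
  have hrej : ∀ y' ∈ J \ I, insert y' I ∉ ℐ := by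
    intro y' hy'
    have hy'J := (Finset.mem_sdiff.1 hy').1
    exact hkey y' ((hadm J hJ).1 hy'J) (Finset.mem_sdiff.1 hy').2
      (lt_of_lt_of_le hcon (hymin y' hy'J))
  obtain ⟨hinadm, x, hxI, h1, h2⟩ := hex I hIc J hJ (lt_of_le_of_lt hIcard hiJ) hrej
  -- an inadmissible pair: a ∈ I, -a ∈ J
  have hpair : ∃ a, a ∈ I ∧ -a ∈ J := by
    simp only [IsAdmissibleSet, not_forall] at hinadm
    obtain ⟨a, haU, hnaU⟩ := hinadm
    rw [not_not] at hnaU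
    have hIadm := (hadm I hIc).2
    have hJadm := (hadm J hJ).2
    rcases Finset.mem_union.1 haU with h | h <;> rcases Finset.mem_union.1 hnaU with h' | h'
    · exact absurd h' (hIadm a h)
    · exact ⟨a, h, h'⟩
    · exact ⟨-a, h', by simpa using h⟩
    · exact absurd h' (hJadm a h)
  obtain ⟨a, haI, hnaJ⟩ := hpair
  -- elements of I are strictly above x₀
  have hIup : ∀ b ∈ I, w x₀ < w b := by
    intro b hb
    rw [hIeqB, List.mem_toFinset] at hb
    have hppw : P.Pairwise (fun a b => w b < w a) := hpw.sublist hpsub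
    rw [happ2, List.pairwise_append] at hppw
    exact hppw.2.2 b hb x₀ (List.mem_cons_self)
  have hawa : w x₀ < w a := hIup a haI
  have hnawa : w x₀ < w (-a) := lt_of_lt_of_le hcon (hymin _ hnaJ)
  have hwx₀neg : w x₀ < 0 := by
    have := hw.2 a; linarith [hw.2 a]
  -- the exchange element x is at or below x₀
  have hxS : x ∈ SympE n := (hadm _ h1).1 (Finset.mem_insert_self _ _)
  have hxle : w x ≤ w x₀ := by
    by_contra hgt
    push_neg at hgt
    exact hkey x hxS hxI hgt h1
  -- -x is strictly above x₀
  have hnxS : -x ∈ SympE n := neg_mem_sympE hxS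
  have hwnx : w x₀ < w (-x) := by rw [hw.2]; linarith
  have hnxI : -x ∉ I := by
    intro hmem
    exact (hadm _ h1).2 x (Finset.mem_insert_self _ _) (Finset.mem_insert_of_mem hmem)
  have hnxl₁ : -x ∈ l₁ := hmeml₁ _ hnxS hwnx
  obtain ⟨m₁, m₂, hm⟩ := List.append_of_mem hnxl₁
  set Q₁ := greedyAux ℬ m₁ ∅ with hQ₁def
  have happQ : P₁ = Q₁ ++ greedyAux ℬ (-x :: m₂) Q₁.toFinset := by
    rw [hP₁def, hm, greedyAux_append, Finset.empty_union]
  have hQsub : Q₁.toFinset ⊆ I \ negSet J := by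
    intro b hb
    rw [List.mem_toFinset] at hb
    have hbP₁ : b ∈ P₁ := by rw [happQ]; exact List.mem_append_left _ hb
    have hbI : b ∈ I := by rw [hIeqB, List.mem_toFinset]; exact hbP₁
    refine Finset.mem_sdiff.2 ⟨hbI, ?_⟩
    intro hbneg
    obtain ⟨c, hcJ, hcb⟩ := Finset.mem_image.1 hbneg
    have hnbJ : -b ∈ J := by rw [← hcb]; simpa using hcJ
    have hl₁pw : l₁.Pairwise (fun a b => w b < w a) := by
      have := hpw; rw [hl, List.pairwise_append] at this; exact this.1
    rw [hm, List.pairwise_append] at hl₁pw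
    have hblt : w (-x) < w b :=
      hl₁pw.2.2 b ((greedyAux_sublist ℬ m₁ ∅).subset hb) (-x) (List.mem_cons_self)
    have hJlt : w x₀ < w (-b) := lt_of_lt_of_le hcon (hymin _ hnbJ)
    have e1 := hw.2 x
    have e2 := hw.2 b
    linarith
  have haccQ : ∃ B' ∈ ℬ, insert (-x) Q₁.toFinset ⊆ B' := by
    obtain ⟨B', hB', hsub⟩ := exists_maximal_superset ℐ _ h2
    exact ⟨B', hB', (Finset.insert_subset_insert _ hQsub).trans hsub⟩
  have hnxP₁ : -x ∈ P₁ := by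
    rw [happQ]
    apply List.mem_append_right
    simp only [greedyAux]
    rw [if_pos haccQ]
    exact List.mem_cons_self
  exact hnxI (by rw [hIeqB, List.mem_toFinset]; exact hnxP₁)
end
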